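/- (Stationary exact value-difference identity with remainder.) Let X be a finite nonempty set and D a finite set of actions with baseline 0, β ∈ ℝ, ρ ≥ 1. Let V : X → ℝ, v : D × X → ℝ, u : D × X → ℝ, e : D × X → ℝ, f : D × X → X → ℝ satisfy, for all d, x: (i) V(x) = v(d, x) + e(d, x) and (ii) v(d, x) = u(d, x) + β Σ_{x'} f(x' | d, x) V(x'). For s = 1, …, ρ let w_s : D × X → ℝ satisfy Σ_{d ∈ D} w_s(d, x) = 1 for all x, let F(w_s) be the X×X matrix with (x, x') entry Σ_{d} w_s(d, x) f(x' | d, x), and let c(w_s) : X → ℝ be c(w_s)(x) = Σ_{d} w_s(d, x) (u(d, x) + e(d, x)). Write f̃(· | d, x) = f(· | d, x) − f(· | 0, x), ũ(d, x) = u(d, x) − u(0, x), ṽ(d, x) = v(d, x) − v(0, x). Then for all d ∈ D, x ∈ X: ṽ(d, x) = ũ(d, x) + Σ_{τ=1}^{ρ} β^τ f̃(· | d, x)ᵀ ( F(w_1) ⋯ F(w_{τ−1}) ) c(w_τ) + β^{ρ+1} f̃(· | d, x)ᵀ ( F(w_1) ⋯ F(w_ρ) ) V, where the empty matrix product (τ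 = 1) is the identity matrix. -/
import Mathlib


open Matrix

/-- The `w`-weighted one-step transition matrix with `(x, x')` entry
`Σ_d w(d, x) f(x' | d, x)`. -/
noncomputable def statTransMatrix {X D : Type*} [Fintype X] [Fintype D]
    (f : D → X → X → ℝ) (w : D → X → ℝ) : Matrix X X ℝ :=
  Matrix.of fun x x' => ∑ d : D, w d x * f d x x'

/-- The partial products `F(w₁) ⋯ F(w_k)` of weighted transition matrices; the empty
product (`k = 0`) is the identity matrix. -/
noncomputable def prodTransMatrix {X D : Type*} [Fintype X] [DecidableEq X]
    [Fintype D] (f : D → X → X → ℝ) (ws : ℕ → D → X → ℝ) : ℕ → Matrix X X ℝ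
  | 0 => 1
  | (k + 1) => prodTransMatrix f ws k * statTransMatrix f (ws (k + 1))

/-- The `w`-weighted vector `c(w)` with entry `Σ_d w(d, x) (u(d, x) + e(d, x))`. -/
noncomputable def weightedPayoff {X D : Type*} [Fintype D]
    (u e : D → X → ℝ) (w : D → X → ℝ) : X → ℝ :=
  fun x => ∑ d : D, w d x * (u d x + e d x)

/-- Stationary exact value-difference identity with remainder: iterating the weighted
value identity `V = c(w) + β F(w) V` forward ρ periods inside the one-step
value-difference identity `ṽ(d,x) = ũ(d,x) + β f̃(·|d,x)ᵀ V` yields ρ periods of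
weighted payoffs plus a `β^(ρ+1)`-discounted remainder involving `V`. -/
theorem stationary_exact_value_difference_identity
    {X D : Type*} [Fintype X] [DecidableEq X] [Nonempty X] [Fintype D]
    (d₀ : D) (β : ℝ) (ρ : ℕ) (hρ : 1 ≤ ρ)
    (V : X → ℝ) (v : D → X → ℝ) (u : D → X → ℝ) (e : D → X → ℝ)
    (f : D → X → X → ℝ)
    (hAM : ∀ (d : D) (x : X), V x = v d x + e d x)
    (hBellman : ∀ (d : D) (x : X),
      v d x = u d x + β * ∑ x' : X, f d x x' * V x')
    (ws : ℕ → D → X → ℝ)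
    (hw : ∀ s, 1 ≤ s → s ≤ ρ → ∀ x : X, ∑ d : D, ws s d x = 1) :
    ∀ (d : D) (x : X),
      v d x - v d₀ x = (u d x - u d₀ x)
        + (∑ τ ∈ Finset.range ρ, β ^ (τ + 1) *
            ∑ x' : X,
              ((fun x₁ => f d x x₁ - f d₀ x x₁) ᵥ* prodTransMatrix f ws τ) x' *
                weightedPayoff u e (ws (τ + 1)) x')
        + β ^ (ρ + 1) *
            ∑ x' : X,
              ((fun x₁ => f d x x₁ - f d₀ x x₁) ᵥ* prodTransMatrix f ws ρ) x' * V x' := by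
  intro d x
  set g : X → ℝ := fun x₁ => f d x x₁ - f d₀ x x₁ with hg
  -- pointwise weighted value identity
  have hV : ∀ τ : ℕ, 1 ≤ τ → τ ≤ ρ → ∀ y : X,
      V y = weightedPayoff u e (ws τ) y
        + β * ∑ y' : X, statTransMatrix f (ws τ) y y' * V y' := by
    intro τ h1 h2 y
    have hsum := hw τ h1 h2 y
    have hswap : ∑ y' : X, statTransMatrix f (ws τ) y y' * V y'
        = ∑ d' : D, ws τ d' y * ∑ y' : X, f d' y y' * V y' := by
      simp only [statTransMatrix, Matrix.of_apply, Finset.sum_mul, Finset.mul_sum,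
        mul_assoc]
      exact Finset.sum_comm
    rw [hswap]
    simp only [weightedPayoff]
    rw [Finset.mul_sum, ← Finset.sum_add_distrib]
    have : ∀ d' : D, ws τ d' y * (u d' y + e d' y)
        + β * (ws τ d' y * ∑ y' : X, f d' y y' * V y') = ws τ d' y * V y := by
      intro d'
      rw [hAM d' y, hBellman d' y]; ring
    rw [Finset.sum_congr rfl fun d' _ => this d', ← Finset.sum_mul, hsum, one_mul]
  -- main induction
  have key : ∀ k : ℕ, k ≤ ρ → ∀ gg : X → ℝ,
      ∑ y : X, gg y * V y
        = (∑ τ ∈ Finset.range k, β ^ τ *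
            ∑ y : X, (gg ᵥ* prodTransMatrix f ws τ) y * weightedPayoff u e (ws (τ + 1)) y)
          + β ^ k * ∑ y : X, (gg ᵥ* prodTransMatrix f ws k) y * V y := by
    intro k
    induction k with
    | zero => intro _ gg; simp [prodTransMatrix, Matrix.vecMul_one]
    | succ k ih =>
      intro hk gg
      have hk' : k ≤ ρ := Nat.le_of_succ_le hk
      rw [ih hk' gg]
      have step : ∑ y : X, (gg ᵥ* prodTransMatrix f ws k) y * V y
          = (∑ y : X, (gg ᵥ* prodTransMatrix f ws k) y * weightedPayoff u e (ws (k + 1)) y)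
            + β * ∑ y : X, (gg ᵥ* prodTransMatrix f ws (k + 1)) y * V y := by
        have h1 : ∀ y : X, (gg ᵥ* prodTransMatrix f ws k) y * V y
            = (gg ᵥ* prodTransMatrix f ws k) y * weightedPayoff u e (ws (k + 1)) y
              + β * ((gg ᵥ* prodTransMatrix f ws k) y
                * ∑ y' : X, statTransMatrix f (ws (k + 1)) y y' * V y') := by
          intro y
          rw [hV (k + 1) (Nat.succ_le_succ (Nat.zero_le k)) hk y]; ring
        rw [Finset.sum_congr rfl fun y _ => h1 y, Finset.sum_add_distrib, ← Finset.mul_sum]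
        congr 2
        have : ∑ y : X, (gg ᵥ* prodTransMatrix f ws k) y
            * ∑ y' : X, statTransMatrix f (ws (k + 1)) y y' * V y'
            = ∑ y' : X, ((gg ᵥ* prodTransMatrix f ws k) ᵥ* statTransMatrix f (ws (k + 1))) y' * V y' := by
          simp only [Matrix.vecMul, dotProduct, Finset.sum_mul, Finset.mul_sum,
            mul_assoc]
          exact Finset.sum_comm
        rw [this, Matrix.vecMul_vecMul]
        rfl
      rw [step, Finset.sum_range_succ]
      ring
  have base : v d x - v d₀ x = (u d x - u d₀ x) + β * ∑ y : X, g y * V y := by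
    rw [hBellman d x, hBellman d₀ x]
    have : ∑ y : X, g y * V y
        = (∑ y : X, f d x y * V y) - ∑ y : X, f d₀ x y * V y := by
      rw [← Finset.sum_sub_distrib]
      exact Finset.sum_congr rfl fun y _ => by simp [hg, sub_mul]
    rw [this]; ring
  rw [base, key ρ le_rfl g, mul_add, Finset.mul_sum]
  have hterm : ∀ τ ∈ Finset.range ρ,
      β * (β ^ τ * ∑ y : X, (g ᵥ* prodTransMatrix f ws τ) y * weightedPayoff u e (ws (τ + 1)) y)
        = β ^ (τ + 1) * ∑ y : X, (g ᵥ* prodTransMatrix f ws τ) y * weightedPayoff u e (ws (τ + 1)) y := by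
    intro τ _; ring
  rw [Finset.sum_congr rfl hterm]
  ring
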